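/- Let H be a finite hypothesis set with zero-one losses ℓ(h,i) ∈ {0,1} on n points, and W ⊆ Δₙ compact convex. Then inf over P ∈ Δ_H of sup over w ∈ W of ∑ᵢ wᵢ 𝔼_{h∼P}[ℓ(h,i)] < 1/2 if and only if for every w ∈ W there exists h ∈ H with ∑ᵢ wᵢ ℓ(h,i) < 1/2. -/

import Mathlib

private lemma swap_sum {H : Type*} [Fintype H] {n : ℕ} (ℓ : H → Fin n → ℝ)
    (w : Fin n → ℝ) (P : H → ℝ) :
    ∑ i, w i * ∑ h, P h * ℓ h i = ∑ h, P h * ∑ i, w i * ℓ h i := by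
  simp only [Finset.mul_sum]
  rw [Finset.sum_comm]
  exact Finset.sum_congr rfl fun h _ => Finset.sum_congr rfl fun i _ => by ring

/-- Boostability / weak-learning equivalence: the ensemble RAI game value is below 1/2
iff for every allowed weighting some hypothesis has weighted error below 1/2. -/
theorem stmt_3 {H : Type*} [Fintype H] [Nonempty H] (n : ℕ) (hn : 0 < n)
    (ℓ : H → Fin n → ℝ) (hℓ : ∀ h i, ℓ h i = 0 ∨ ℓ h i = 1)
    (W : Set (Fin n → ℝ)) (hWne : W.Nonempty) (hWcpt : IsCompact W)
    (hWconv : Convex ℝ W)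
    (hWΔ : ∀ w ∈ W, (∀ i, 0 ≤ w i) ∧ (∑ i, w i) = 1) :
    sInf ((fun P : H → ℝ =>
        sSup ((fun w : Fin n → ℝ => ∑ i, w i * ∑ h, P h * ℓ h i) '' W)) ''
      {P : H → ℝ | (∀ h, 0 ≤ P h) ∧ (∑ h, P h) = 1}) < 1/2
    ↔ ∀ w ∈ W, ∃ h : H, ∑ i, w i * ℓ h i < 1/2 := by
  classical
  have hℓ0 : ∀ h i, 0 ≤ ℓ h i := fun h i => by rcases hℓ h i with h1 | h1 <;> simp [h1]
  have hcont : ∀ P : H → ℝ, Continuous (fun w : Fin n → ℝ => ∑ i, w i * ∑ h, P h * ℓ h i) := by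
    intro P
    exact continuous_finset_sum _ fun i _ => (continuous_apply i).mul continuous_const
  obtain ⟨w0, hw0⟩ := hWne
  constructor
  · -- forward direction
    intro hlt w hw
    have hne : ((fun P : H → ℝ =>
        sSup ((fun w : Fin n → ℝ => ∑ i, w i * ∑ h, P h * ℓ h i) '' W)) ''
        {P : H → ℝ | (∀ h, 0 ≤ P h) ∧ (∑ h, P h) = 1}).Nonempty := by
      refine ⟨_, ⟨fun _ => (Fintype.card H : ℝ)⁻¹, ⟨fun h => by positivity, ?_⟩, rfl⟩⟩
      have : (Fintype.card H : ℝ) ≠ 0 := Nat.cast_ne_zero.mpr Fintype.card_ne_zero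
      rw [Finset.sum_const, Finset.card_univ, nsmul_eq_mul]; exact mul_inv_cancel₀ this
    obtain ⟨vv, ⟨P, hP, rfl⟩, hv⟩ := exists_lt_of_csInf_lt hne hlt
    have hbdd : BddAbove ((fun w : Fin n → ℝ => ∑ i, w i * ∑ h, P h * ℓ h i) '' W) :=
      (hWcpt.image (hcont P)).bddAbove
    have hg : ∑ i, w i * ∑ h, P h * ℓ h i < 1/2 :=
      lt_of_le_of_lt (le_csSup hbdd ⟨w, hw, rfl⟩) hv
    by_contra hcon
    push_neg at hcon
    have : (1:ℝ)/2 ≤ ∑ i, w i * ∑ h, P h * ℓ h i := by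
      rw [swap_sum]
      calc (1:ℝ)/2 = ∑ h, P h * (1/2) := by rw [← Finset.sum_mul, hP.2, one_mul]
        _ ≤ ∑ h, P h * ∑ i, w i * ℓ h i :=
          Finset.sum_le_sum fun h _ => mul_le_mul_of_nonneg_left (hcon h) (hP.1 h)
    linarith
  · -- reverse direction: separation argument
    intro hweak
    set e : (Fin n → ℝ) → (H → ℝ) := fun w h => ∑ i, w i * ℓ h i with he
    have heLin : IsLinearMap ℝ e := by
      constructor
      · intro x y; funext h; simp [he, add_mul, Finset.sum_add_distrib]
      · intro c x; funext h; simp [he, Finset.mul_sum, mul_assoc]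
    have heCont : Continuous e := by
      refine continuous_pi fun h => continuous_finset_sum _ fun i _ => ?_
      exact (continuous_apply i).mul continuous_const
    have hCcpt : IsCompact (e '' W) := hWcpt.image heCont
    have hCconv : Convex ℝ (e '' W) := hWconv.is_linear_image heLin
    have hdisj : Disjoint (e '' W) (Set.Ici (fun _ : H => (1:ℝ)/2)) := by
      rw [Set.disjoint_left]
      rintro vv ⟨w, hw, rfl⟩ hvK
      obtain ⟨h, hh⟩ := hweak w hw
      exact absurd (hvK h) (not_le.mpr hh)
    obtain ⟨f, u, v, hfu, huv, hfv⟩ :=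
      geometric_hahn_banach_compact_closed hCconv hCcpt (convex_Ici (fun _ : H => (1:ℝ)/2)) isClosed_Ici hdisj
    set a : H → ℝ := fun h => f (Pi.single h 1) with ha
    have hfx : ∀ x : H → ℝ, f x = ∑ h, x h * a h := by
      intro x
      have hxeq : x = ∑ h, x h • (Pi.single h (1:ℝ) : H → ℝ) := by
        funext j
        rw [Finset.sum_apply]
        rw [Finset.sum_eq_single j]
        · simp
        · intro b _ hb; simp [Pi.single_apply, hb]
        · simp
      conv_lhs => rw [hxeq]
      rw [map_sum]
      exact Finset.sum_congr rfl fun h _ => by rw [map_smul]; simp [ha, smul_eq_mul]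
    have hKmem : (fun _ : H => (1:ℝ)/2) ∈ Set.Ici (fun _ : H => (1:ℝ)/2) := Set.mem_Ici.mpr (le_refl _)
    have hchalf : f (fun _ : H => (1:ℝ)/2) = (∑ h, a h) / 2 := by
      rw [hfx, Finset.sum_div]; exact Finset.sum_congr rfl fun h _ => by ring
    have hvc : v < (∑ h, a h) / 2 := by rw [← hchalf]; exact hfv _ hKmem
    have hae : ∀ h, 0 ≤ a h := by
      intro h
      by_contra hneg
      push_neg at hneg
      have hfc : v < f (fun _ : H => (1:ℝ)/2) := hfv _ hKmem
      obtain ⟨t, ht0, hta⟩ : ∃ t : ℝ, 0 ≤ t ∧ t * a h = v - f (fun _ : H => (1:ℝ)/2) + a h := by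
        refine ⟨(v - f (fun _ : H => (1:ℝ)/2)) / a h + 1, ?_, ?_⟩
        · have hdiv : 0 < (v - f (fun _ : H => (1:ℝ)/2)) / a h :=
            div_pos_of_neg_of_neg (by linarith) hneg
          linarith
        · field_simp [hneg.ne]
      have hmem : (fun _ : H => (1:ℝ)/2) + t • (Pi.single h (1:ℝ) : H → ℝ)
          ∈ Set.Ici (fun _ : H => (1:ℝ)/2) := by
        intro j
        simp only [Pi.add_apply, Pi.smul_apply, smul_eq_mul]
        rcases eq_or_ne h j with hj | hj
        · subst hj; simp; positivity
        · simp [Pi.single_apply, hj]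
      have hgt := hfv _ hmem
      rw [map_add, map_smul, smul_eq_mul] at hgt
      have hfs : f (Pi.single h 1) = a h := rfl
      rw [hfs, hta] at hgt
      linarith
    have hs : 0 < ∑ h, a h := by
      rcases (Finset.sum_nonneg fun h _ => hae h).lt_or_eq with h0 | h0
      · exact h0
      · exfalso
        have hall : ∀ h, a h = 0 := fun h =>
          (Finset.sum_eq_zero_iff_of_nonneg (fun h _ => hae h)).mp h0.symm h (Finset.mem_univ h)
        have hfw0 : f (e w0) < u := hfu _ ⟨w0, hw0, rfl⟩
        have hze : f (e w0) = 0 := by rw [hfx]; simp [hall]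
        rw [hze] at hfw0
        rw [← h0] at hvc
        norm_num at hvc
        linarith
    set s : ℝ := ∑ h, a h with hsdef
    set P : H → ℝ := fun h => a h / s with hPdef
    have hPmem : P ∈ {P : H → ℝ | (∀ h, 0 ≤ P h) ∧ (∑ h, P h) = 1} := by
      constructor
      · intro h; exact div_nonneg (hae h) hs.le
      · rw [← Finset.sum_div, ← hsdef]; field_simp
    have hus : u / s < 1/2 := by
      rw [div_lt_iff₀ hs]
      have : u < s / 2 := lt_trans huv hvc
      linarith
    have hval : ∀ w ∈ W, ∑ i, w i * ∑ h, P h * ℓ h i < u / s := by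
      intro w hw
      have h1 : f (e w) < u := hfu _ ⟨w, hw, rfl⟩
      rw [hfx] at h1
      rw [swap_sum]
      have heq : ∑ h, P h * ∑ i, w i * ℓ h i = (∑ h, e w h * a h) / s := by
        rw [Finset.sum_div]
        exact Finset.sum_congr rfl fun h _ => by rw [hPdef]; simp only [he]; ring
      rw [heq]
      exact (div_lt_div_iff_of_pos_right hs).mpr h1
    have himgne : ((fun w : Fin n → ℝ => ∑ i, w i * ∑ h, P h * ℓ h i) '' W).Nonempty :=
      ⟨_, ⟨w0, hw0, rfl⟩⟩
    have hsup : sSup ((fun w : Fin n → ℝ => ∑ i, w i * ∑ h, P h * ℓ h i) '' W) < 1/2 := by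
      refine lt_of_le_of_lt (csSup_le himgne ?_) hus
      rintro x ⟨w, hw, rfl⟩
      exact (hval w hw).le
    -- bounded below by 0
    have hbddB : BddBelow ((fun P : H → ℝ =>
        sSup ((fun w : Fin n → ℝ => ∑ i, w i * ∑ h, P h * ℓ h i) '' W)) ''
        {P : H → ℝ | (∀ h, 0 ≤ P h) ∧ (∑ h, P h) = 1}) := by
      refine ⟨0, ?_⟩
      rintro x ⟨Q, hQ, rfl⟩
      have hb : BddAbove ((fun w : Fin n → ℝ => ∑ i, w i * ∑ h, Q h * ℓ h i) '' W) :=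
        (hWcpt.image (hcont Q)).bddAbove
      refine le_trans ?_ (le_csSup hb ⟨w0, hw0, rfl⟩)
      refine Finset.sum_nonneg fun i _ => mul_nonneg ((hWΔ w0 hw0).1 i) ?_
      exact Finset.sum_nonneg fun h _ => mul_nonneg (hQ.1 h) (hℓ0 h i)
    exact lt_of_le_of_lt (csInf_le hbddB ⟨P, hPmem, rfl⟩) hsup
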